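/- Let G be a connected multigraph on vertex set {0,1,…,n} (n ≥ 1) with root 0. The map O ↦ (indeg_O(1)−1, indeg_O(2)−1, …, indeg_O(n)−1) is a bijection between A(G), the set of acyclic orientations of G with unique source 0, and MPF(G), the set of maximal G-parking functions. -/

import Mathlib

/-- `deg^G_U(i) = ∑_{j ∉ U} ω(i,j)`. -/
def degOut {n : ℕ} (ω : Fin (n + 1) → Fin (n + 1) → ℕ) (U : Finset (Fin (n + 1)))
    (i : Fin (n + 1)) : ℕ :=
  ∑ j ∈ Uᶜ, ω i j

/-- The multigraph with edge-weight function `ω` on `{0,…,n}` is connected. -/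
def ConnMG {n : ℕ} (ω : Fin (n + 1) → Fin (n + 1) → ℕ) : Prop :=
  ∀ U : Finset (Fin (n + 1)), U.Nonempty → (0 : Fin (n + 1)) ∉ U →
    ∃ i ∈ U, 1 ≤ degOut ω U i

/-- `α` is a `G`-parking function (the nonroot vertex `i+1` carries value `α i`). -/
def IsGPF (n : ℕ) (ω : Fin (n + 1) → Fin (n + 1) → ℕ) (α : Fin n → ℕ) : Prop :=
  ∀ U : Finset (Fin (n + 1)), U.Nonempty → (0 : Fin (n + 1)) ∉ U →
    ∃ i : Fin n, i.succ ∈ U ∧ α i + 1 ≤ degOut ω U i.succ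

/-- Maximal `G`-parking functions, w.r.t. the componentwise order on `ℕ^n`. -/
def MPFset (n : ℕ) (ω : Fin (n + 1) → Fin (n + 1) → ℕ) : Set (Fin n → ℕ) :=
  {α | IsGPF n ω α ∧ ∀ β : Fin n → ℕ, IsGPF n ω β → α ≤ β → β = α}

/-- `O` is an orientation of the multigraph with edge-weight function `ω`. -/
def IsOrientation {n : ℕ} (ω : Fin (n + 1) → Fin (n + 1) → ℕ)
    (O : Set (Fin (n + 1) × Fin (n + 1))) : Prop :=
  (∀ i, (i, i) ∉ O) ∧ (∀ p ∈ O, 1 ≤ ω p.1 p.2) ∧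
    ∀ i j : Fin (n + 1), 1 ≤ ω i j → Xor' ((i, j) ∈ O) ((j, i) ∈ O)

/-- `indeg_O(i) = ∑_{(j,i) ∈ O} ω(i,j)`. -/
noncomputable def indegO {n : ℕ} (ω : Fin (n + 1) → Fin (n + 1) → ℕ)
    (O : Set (Fin (n + 1) × Fin (n + 1))) (i : Fin (n + 1)) : ℕ :=
  ∑ᶠ j ∈ {j : Fin (n + 1) | (j, i) ∈ O}, ω i j

/-- `O` is acyclic: no sequence `(i_1,i_2),(i_2,i_3),…,(i_k,i_{k+1})` of elements of `O`
with `i_1 = i_{k+1}`. -/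
def AcyclicO {n : ℕ} (O : Set (Fin (n + 1) × Fin (n + 1))) : Prop :=
  ¬ ∃ (k : ℕ) (f : ℕ → Fin (n + 1)), 0 < k ∧ (∀ m < k, (f m, f (m + 1)) ∈ O) ∧ f 0 = f k

/-- `A(G)`: acyclic orientations of `G` with unique source `0` (a source is a vertex of
indegree `0`). -/
def ASet (n : ℕ) (ω : Fin (n + 1) → Fin (n + 1) → ℕ) :
    Set (Set (Fin (n + 1) × Fin (n + 1))) :=
  {O | IsOrientation ω O ∧ AcyclicO O ∧ indegO ω O 0 = 0 ∧
    ∀ i : Fin (n + 1), i ≠ 0 → indegO ω O i ≠ 0}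
section Aux

open Finset

open Classical in
lemma indegO_eq_sum {n : ℕ} (ω : Fin (n + 1) → Fin (n + 1) → ℕ)
    (O : Set (Fin (n + 1) × Fin (n + 1))) (i : Fin (n + 1)) :
    indegO ω O i = ∑ j ∈ Finset.univ.filter (fun j => (j, i) ∈ O), ω i j := by
  rw [indegO, ← finsum_mem_coe_finset]
  congr 1
  ext j
  simp

lemma no_fwd_walk {n : ℕ} {O : Set (Fin (n + 1) × Fin (n + 1))} (hO : AcyclicO O)
    (g : ℕ → Fin (n + 1)) (hg : ∀ m, (g m, g (m + 1)) ∈ O) : False := by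
  obtain ⟨a, b, hab, heq⟩ := Finite.exists_ne_map_eq_of_infinite g
  have key : ∀ a b : ℕ, a < b → g a = g b → False := by
    intro a b hlt he
    refine hO ⟨b - a, fun m => g (a + m), by omega, fun m hm => ?_, ?_⟩
    · show (g (a + m), g (a + (m + 1))) ∈ O
      rw [show a + (m + 1) = (a + m) + 1 from by omega]
      exact hg (a + m)
    · show g (a + 0) = g (a + (b - a))
      rw [show a + 0 = a from by omega, show a + (b - a) = b from by omega, he]
  rcases hab.lt_or_gt with h | h
  · exact key a b h heq
  · exact key b a h heq.symm

lemma no_bwd_walk {n : ℕ} {O : Set (Fin (n + 1) × Fin (n + 1))} (hO : AcyclicO O)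
    (g : ℕ → Fin (n + 1)) (hg : ∀ m, (g (m + 1), g m) ∈ O) : False := by
  obtain ⟨a, b, hab, heq⟩ := Finite.exists_ne_map_eq_of_infinite g
  have key : ∀ a b : ℕ, a < b → g a = g b → False := by
    intro a b hlt he
    refine hO ⟨b - a, fun m => g (b - m), by omega, fun m hm => ?_, ?_⟩
    · show (g (b - m), g (b - (m + 1))) ∈ O
      rw [show b - m = (b - (m + 1)) + 1 from by omega]
      exact hg (b - (m + 1))
    · show g (b - 0) = g (b - (b - a))
      rw [show b - 0 = b from by omega, show b - (b - a) = a from by omega, he]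
  rcases hab.lt_or_gt with h | h
  · exact key a b h heq
  · exact key b a h heq.symm

lemma exists_local_source {n : ℕ} {O : Set (Fin (n + 1) × Fin (n + 1))} (hO : AcyclicO O)
    (U : Finset (Fin (n + 1))) (hU : U.Nonempty) :
    ∃ i ∈ U, ∀ j ∈ U, (j, i) ∉ O := by
  by_contra h
  push_neg at h
  have step : ∀ x : {v // v ∈ U}, ∃ y : {v // v ∈ U}, (y.1, x.1) ∈ O := by
    rintro ⟨v, hv⟩
    obtain ⟨j, hj, hjv⟩ := h v hv
    exact ⟨⟨j, hj⟩, hjv⟩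
  choose f hf using step
  let x0 : {v // v ∈ U} := ⟨hU.choose, hU.choose_spec⟩
  let g : ℕ → {v // v ∈ U} := fun m => f^[m] x0
  refine no_bwd_walk hO (fun m => (g m).1) (fun m => ?_)
  show ((g (m + 1)).1, (g m).1) ∈ O
  have hgs : g (m + 1) = f (g m) := Function.iterate_succ_apply' f m x0
  rw [hgs]
  exact hf (g m)

open Classical in
lemma sum_indeg {n : ℕ} {ω : Fin (n + 1) → Fin (n + 1) → ℕ}
    (hsymm : ∀ i j, ω i j = ω j i) {O : Set (Fin (n + 1) × Fin (n + 1))}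
    (hO : IsOrientation ω O) :
    2 * ∑ i, indegO ω O i = ∑ i, ∑ j, ω i j := by
  have e1 : ∀ i : Fin (n + 1), indegO ω O i = ∑ j, if (j, i) ∈ O then ω i j else 0 := by
    intro i
    rw [indegO_eq_sum, Finset.sum_filter]
  have h2 : ∑ i : Fin (n + 1), ∑ j : Fin (n + 1), (if (j, i) ∈ O then ω i j else 0)
      = ∑ i : Fin (n + 1), ∑ j : Fin (n + 1), (if (i, j) ∈ O then ω i j else 0) := by
    rw [Finset.sum_comm]
    refine Finset.sum_congr rfl fun i _ => Finset.sum_congr rfl fun j _ => ?_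
    rw [hsymm]
  calc 2 * ∑ i, indegO ω O i
      = (∑ i : Fin (n + 1), ∑ j : Fin (n + 1), (if (j, i) ∈ O then ω i j else 0))
        + ∑ i : Fin (n + 1), ∑ j : Fin (n + 1), (if (i, j) ∈ O then ω i j else 0) := by
        rw [two_mul]
        simp only [e1]
        rw [h2]
    _ = ∑ i : Fin (n + 1), ∑ j : Fin (n + 1),
        ((if (j, i) ∈ O then ω i j else 0) + (if (i, j) ∈ O then ω i j else 0)) := by
        rw [← Finset.sum_add_distrib]
        exact Finset.sum_congr rfl fun i _ => (Finset.sum_add_distrib).symm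
    _ = ∑ i : Fin (n + 1), ∑ j : Fin (n + 1), ω i j := by
        refine Finset.sum_congr rfl fun i _ => Finset.sum_congr rfl fun j _ => ?_
        by_cases hw : 1 ≤ ω i j
        · rcases hO.2.2 i j hw with ⟨h1, h2⟩ | ⟨h1, h2⟩
          · have : (j, i) ∉ O := h2
            simp [h1, this]
          · have : (i, j) ∉ O := h2
            simp [h1, this]
        · have hz : ω i j = 0 := by omega
          have hz' : ω j i = 0 := by rw [hsymm]; exact hz
          have n1 : (j, i) ∉ O := fun hmem => by
            have := hO.2.1 (j, i) hmem; simp at this; omega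
          have n2 : (i, j) ∉ O := fun hmem => by
            have := hO.2.1 (i, j) hmem; simp at this; omega
          simp [n1, n2, hz]

end Aux
section Aux2

open Classical in
lemma pf_of_aset {n : ℕ} {ω : Fin (n + 1) → Fin (n + 1) → ℕ}
    {O : Set (Fin (n + 1) × Fin (n + 1))} (hO : O ∈ ASet n ω) :
    IsGPF n ω (fun i => indegO ω O i.succ - 1) := by
  obtain ⟨hor, hacy, h0, hsrc⟩ := hO
  intro U hU h0U
  obtain ⟨v, hvU, hv⟩ := exists_local_source hacy U hU
  have hv0 : v ≠ 0 := fun h => h0U (h ▸ hvU)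
  refine ⟨v.pred hv0, by rwa [Fin.succ_pred], ?_⟩
  show indegO ω O (v.pred hv0).succ - 1 + 1 ≤ degOut ω U (v.pred hv0).succ
  rw [Fin.succ_pred]
  have hpos : 1 ≤ indegO ω O v := Nat.one_le_iff_ne_zero.2 (hsrc v hv0)
  have hle : indegO ω O v ≤ degOut ω U v := by
    rw [indegO_eq_sum, degOut]
    apply Finset.sum_le_sum_of_subset
    intro j hj
    simp only [Finset.mem_filter] at hj
    simp only [Finset.mem_compl]
    exact fun hjU => hv j hjU hj.2
  omega

open Classical in
noncomputable def dpick {n : ℕ} (ω : Fin (n + 1) → Fin (n + 1) → ℕ) (α : Fin n → ℕ)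
    (V : Finset (Fin (n + 1))) : Fin (n + 1) :=
  if h : ∃ i : Fin n, i.succ ∈ V ∧ α i + 1 ≤ degOut ω V i.succ then h.choose.succ else 0

noncomputable def dU {n : ℕ} (ω : Fin (n + 1) → Fin (n + 1) → ℕ) (α : Fin n → ℕ) :
    ℕ → Finset (Fin (n + 1))
  | 0 => Finset.univ.erase 0
  | t + 1 => (dU ω α t).erase (dpick ω α (dU ω α t))

lemma dpick_spec {n : ℕ} {ω : Fin (n + 1) → Fin (n + 1) → ℕ} {α : Fin n → ℕ}
    (hα : IsGPF n ω α) {V : Finset (Fin (n + 1))} (hV : V.Nonempty)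
    (h0 : (0 : Fin (n + 1)) ∉ V) :
    ∃ i : Fin n, i.succ = dpick ω α V ∧ i.succ ∈ V ∧ α i + 1 ≤ degOut ω V i.succ := by
  have h : ∃ i : Fin n, i.succ ∈ V ∧ α i + 1 ≤ degOut ω V i.succ := hα V hV h0
  refine ⟨h.choose, ?_, h.choose_spec⟩
  rw [dpick, dif_pos h]

lemma dU_zero_not_mem {n : ℕ} (ω : Fin (n + 1) → Fin (n + 1) → ℕ) (α : Fin n → ℕ)
    (t : ℕ) : (0 : Fin (n + 1)) ∉ dU ω α t := by
  induction t with
  | zero => simp [dU]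
  | succ t ih => exact fun h => ih (Finset.mem_of_mem_erase h)

lemma dU_subset_of_le {n : ℕ} (ω : Fin (n + 1) → Fin (n + 1) → ℕ) (α : Fin n → ℕ)
    {s t : ℕ} (h : s ≤ t) : dU ω α t ⊆ dU ω α s := by
  induction t, h using Nat.le_induction with
  | base => exact subset_rfl
  | succ t ht ih => exact (Finset.erase_subset _ _).trans ih

lemma dU_card {n : ℕ} {ω : Fin (n + 1) → Fin (n + 1) → ℕ} {α : Fin n → ℕ}
    (hα : IsGPF n ω α) (t : ℕ) : (dU ω α t).card ≤ n - t := by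
  induction t with
  | zero =>
    show (Finset.univ.erase (0 : Fin (n + 1))).card ≤ n - 0
    rw [Finset.card_erase_of_mem (Finset.mem_univ 0), Finset.card_univ, Fintype.card_fin]
    omega
  | succ t ih =>
    by_cases hne : (dU ω α t).Nonempty
    · obtain ⟨i, hi1, hi2, _⟩ := dpick_spec hα hne (dU_zero_not_mem ω α t)
      have hmem : dpick ω α (dU ω α t) ∈ dU ω α t := hi1 ▸ hi2
      show ((dU ω α t).erase _).card ≤ n - (t + 1)
      rw [Finset.card_erase_of_mem hmem]
      have hc : 1 ≤ (dU ω α t).card := Finset.card_pos.2 hne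
      omega
    · rw [Finset.not_nonempty_iff_eq_empty] at hne
      show ((dU ω α t).erase _).card ≤ n - (t + 1)
      rw [hne]
      simp

lemma dU_empty {n : ℕ} {ω : Fin (n + 1) → Fin (n + 1) → ℕ} {α : Fin n → ℕ}
    (hα : IsGPF n ω α) : dU ω α n = ∅ := by
  have := dU_card hα n
  simp only [Nat.sub_self, Nat.le_zero, Finset.card_eq_zero] at this
  exact this

open Classical in
lemma dhar {n : ℕ} {ω : Fin (n + 1) → Fin (n + 1) → ℕ}
    (hsymm : ∀ i j, ω i j = ω j i) (hdiag : ∀ i, ω i i = 0)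
    {α : Fin n → ℕ} (hα : IsGPF n ω α) :
    ∃ O ∈ ASet n ω, ∀ i : Fin n, α i + 1 ≤ indegO ω O i.succ := by
  have hex : ∀ v : Fin (n + 1), ∃ t, v ∉ dU ω α t :=
    fun v => ⟨n, by rw [dU_empty hα]; exact Finset.notMem_empty v⟩
  let r : Fin (n + 1) → ℕ := fun v => Nat.find (hex v)
  have hr_mem : ∀ (v : Fin (n + 1)) (t : ℕ), v ∈ dU ω α t ↔ t < r v := by
    intro v t
    constructor
    · intro hv
      rw [Nat.lt_find_iff]
      intro s hs
      exact not_not_intro (dU_subset_of_le ω α hs hv)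
    · intro h
      by_contra hc
      exact Nat.find_le hc |>.not_gt h
  have hr0 : r 0 = 0 := by
    rw [Nat.find_eq_zero]
    exact dU_zero_not_mem ω α 0
  have hrpos : ∀ v : Fin (n + 1), v ≠ 0 → 1 ≤ r v := by
    intro v hv
    have : v ∈ dU ω α 0 := by
      show v ∈ Finset.univ.erase 0
      exact Finset.mem_erase.2 ⟨hv, Finset.mem_univ v⟩
    have := (hr_mem v 0).1 this
    omega
  -- key: every nonzero vertex is picked at time r v - 1
  have hkey : ∀ v : Fin (n + 1), v ≠ 0 →
      ∃ i : Fin n, i.succ = v ∧ α i + 1 ≤ degOut ω (dU ω α (r v - 1)) v := by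
    intro v hv
    set t := r v - 1 with ht
    have hrv : r v = t + 1 := by have := hrpos v hv; omega
    have hvt : v ∈ dU ω α t := (hr_mem v t).2 (by omega)
    have hvt1 : v ∉ dU ω α (t + 1) := by
      rw [← hrv]; exact Nat.find_spec (hex v)
    have hne : (dU ω α t).Nonempty := ⟨v, hvt⟩
    have h0 : (0 : Fin (n + 1)) ∉ dU ω α t := dU_zero_not_mem ω α t
    have hveq : v = dpick ω α (dU ω α t) := by
      by_contra hcon
      exact hvt1 (Finset.mem_erase.2 ⟨hcon, hvt⟩)
    obtain ⟨i, hi1, hi2, hi3⟩ := dpick_spec hα hne h0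
    exact ⟨i, by rw [hi1, ← hveq], by rwa [hi1, ← hveq] at hi3⟩
  have hrinj : ∀ v w : Fin (n + 1), r v = r w → v = w := by
    intro v w hvw
    by_cases hv : v = 0
    · by_cases hw : w = 0
      · rw [hv, hw]
      · exfalso; have := hrpos w hw; rw [hv, hr0] at hvw; omega
    · by_cases hw : w = 0
      · exfalso; have := hrpos v hv; rw [hw, hr0] at hvw; omega
      · -- both nonzero: each is dpick of dU (r · - 1)
        have h1 := hkey v hv
        have h2 := hkey w hw
        -- instead reuse: v = dpick (dU (r v - 1)), w = dpick (dU (r w - 1))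
        have hpv : v = dpick ω α (dU ω α (r v - 1)) := by
          have hrv : r v = (r v - 1) + 1 := by have := hrpos v hv; omega
          have hvt : v ∈ dU ω α (r v - 1) := (hr_mem v _).2 (by omega)
          have hvt1 : v ∉ dU ω α ((r v - 1) + 1) := by
            rw [← hrv]; exact Nat.find_spec (hex v)
          by_contra hcon
          exact hvt1 (Finset.mem_erase.2 ⟨hcon, hvt⟩)
        have hpw : w = dpick ω α (dU ω α (r w - 1)) := by
          have hrw : r w = (r w - 1) + 1 := by have := hrpos w hw; omega
          have hwt : w ∈ dU ω α (r w - 1) := (hr_mem w _).2 (by omega)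
          have hwt1 : w ∉ dU ω α ((r w - 1) + 1) := by
            rw [← hrw]; exact Nat.find_spec (hex w)
          by_contra hcon
          exact hwt1 (Finset.mem_erase.2 ⟨hcon, hwt⟩)
        rw [hpv, hpw, hvw]
  -- the orientation
  set O : Set (Fin (n + 1) × Fin (n + 1)) :=
    {p | 1 ≤ ω p.1 p.2 ∧ r p.1 < r p.2} with hOdef
  have hmemO : ∀ a b : Fin (n + 1), (a, b) ∈ O ↔ 1 ≤ ω a b ∧ r a < r b :=
    fun a b => Iff.rfl
  -- indegree computation
  have hindeg : ∀ v : Fin (n + 1),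
      indegO ω O v = ∑ j ∈ Finset.univ.filter (fun j => r j < r v), ω v j := by
    intro v
    rw [indegO_eq_sum]
    apply Finset.sum_subset
    · intro j hj
      simp only [Finset.mem_filter] at hj ⊢
      exact ⟨hj.1, ((hmemO j v).1 hj.2).2⟩
    · intro j hj hj2
      simp only [Finset.mem_filter] at hj hj2
      have : ¬ (1 ≤ ω j v ∧ r j < r v) := fun h => hj2 ⟨hj.1, (hmemO j v).2 h⟩
      have hz : ω j v = 0 := by
        rcases Nat.eq_zero_or_pos (ω j v) with h | h
        · exact h
        · exact absurd ⟨h, hj.2⟩ this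
      rw [hsymm]; exact hz
  -- indegree of nonzero vertices
  have hindeg_ge : ∀ v : Fin (n + 1), v ≠ 0 →
      ∃ i : Fin n, i.succ = v ∧ α i + 1 ≤ indegO ω O v := by
    intro v hv
    obtain ⟨i, hi1, hi2⟩ := hkey v hv
    refine ⟨i, hi1, ?_⟩
    rw [hindeg]
    refine hi2.trans (le_of_eq ?_)
    unfold degOut
    apply Finset.sum_congr _ (fun _ _ => rfl)
    ext j
    simp only [Finset.mem_compl, Finset.mem_filter, Finset.mem_univ, true_and]
    rw [hr_mem j (r v - 1)]
    have := hrpos v hv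
    omega
  refine ⟨O, ⟨⟨?_, ?_, ?_⟩, ?_, ?_, ?_⟩, ?_⟩
  · -- no loops
    intro i hi
    exact absurd ((hmemO i i).1 hi).2 (lt_irrefl _)
  · -- edges have weight
    intro p hp
    exact ((hmemO p.1 p.2).1 hp).1
  · -- Xor
    intro i j hw
    have hij : i ≠ j := fun h => by rw [h, hdiag] at hw; omega
    have hrij : r i ≠ r j := fun h => hij (hrinj i j h)
    rcases hrij.lt_or_gt with h | h
    · left
      refine ⟨(hmemO i j).2 ⟨hw, h⟩, fun hc => ?_⟩
      exact absurd ((hmemO j i).1 hc).2 (by omega)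
    · right
      refine ⟨(hmemO j i).2 ⟨by rwa [hsymm], h⟩, fun hc => ?_⟩
      exact absurd ((hmemO i j).1 hc).2 (by omega)
  · -- acyclic
    rintro ⟨k, f, hk, hf, hfk⟩
    have hmono : ∀ m ≤ k, r (f 0) ≤ r (f m) := by
      intro m
      induction m with
      | zero => exact fun _ => le_rfl
      | succ m ih =>
        intro hm
        have h1 := ih (by omega)
        have h2 := ((hmemO (f m) (f (m + 1))).1 (hf m (by omega))).2
        omega
    have h1 := hmono (k - 1) (by omega)
    have h2 := ((hmemO (f (k - 1)) (f k)).1 (by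
      have := hf (k - 1) (by omega)
      rwa [show k - 1 + 1 = k from by omega] at this)).2
    rw [hfk] at h1
    omega
  · -- source 0
    rw [hindeg]
    apply Finset.sum_eq_zero
    intro j hj
    simp only [Finset.mem_filter] at hj
    rw [hr0] at hj
    omega
  · -- unique source
    intro v hv
    obtain ⟨i, _, hi⟩ := hindeg_ge v hv
    omega
  · -- the inequality
    intro i
    obtain ⟨i', hi'1, hi'2⟩ := hindeg_ge i.succ (Fin.succ_ne_zero i)
    have : i' = i := Fin.succ_injective n hi'1
    rwa [this] at hi'2

end Aux2
section Aux3

open Classical in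
lemma orient_eq {n : ℕ} {ω : Fin (n + 1) → Fin (n + 1) → ℕ}
    (hsymm : ∀ i j, ω i j = ω j i) {O O' : Set (Fin (n + 1) × Fin (n + 1))}
    (hO : IsOrientation ω O) (hO' : IsOrientation ω O') (hacy : AcyclicO O)
    (hdeg : ∀ v, indegO ω O v = indegO ω O' v) : O = O' := by
  set R : Fin (n + 1) × Fin (n + 1) → Prop := fun p => p ∈ O ∧ p ∉ O' with hR
  have hswap : ∀ a b : Fin (n + 1), ((a, b) ∈ O' ∧ (a, b) ∉ O) ↔ R (b, a) := by
    intro a b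
    constructor
    · rintro ⟨h1, h2⟩
      have hw : 1 ≤ ω a b := hO'.2.1 (a, b) h1
      have hba : (b, a) ∈ O := by
        rcases hO.2.2 a b hw with ⟨hx, _⟩ | ⟨hx, _⟩
        · exact absurd hx h2
        · exact hx
      have hba' : (b, a) ∉ O' := by
        rcases hO'.2.2 a b hw with ⟨_, hy⟩ | ⟨_, hy⟩
        · exact hy
        · exact absurd h1 hy
      exact ⟨hba, hba'⟩
    · rintro ⟨h1, h2⟩
      have hw : 1 ≤ ω b a := hO.2.1 (b, a) h1
      have hw' : 1 ≤ ω a b := by rwa [hsymm] at hw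
      have hab' : (a, b) ∈ O' := by
        rcases hO'.2.2 a b hw' with ⟨hx, _⟩ | ⟨hx, _⟩
        · exact hx
        · exact absurd hx h2
      have hab : (a, b) ∉ O := by
        rcases hO.2.2 a b hw' with ⟨_, hy⟩ | ⟨_, hy⟩
        · exact absurd h1 hy
        · intro hc
          rcases hO.2.2 a b hw' with ⟨_, hz⟩ | ⟨_, hz⟩
          · exact hz h1
          · exact hz hc
      exact ⟨hab', hab⟩
  by_cases hRe : ∃ p, R p
  · exfalso
    -- per-vertex in-diff-sum equals per-vertex (O'\O)-in-sum
    have hsums : ∀ v : Fin (n + 1),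
        ∑ j ∈ Finset.univ.filter (fun j => R (j, v)), ω v j
          = ∑ j ∈ Finset.univ.filter (fun j => (j, v) ∈ O' ∧ (j, v) ∉ O), ω v j := by
      intro v
      have e1 : ∑ j ∈ (Finset.univ.filter (fun j => (j, v) ∈ O)).filter
            (fun j => (j, v) ∈ O'), ω v j
          + ∑ j ∈ (Finset.univ.filter (fun j => (j, v) ∈ O)).filter
            (fun j => ¬ (j, v) ∈ O'), ω v j = indegO ω O v := by
        rw [indegO_eq_sum]
        exact Finset.sum_filter_add_sum_filter_not _ _ _
      have e2 : ∑ j ∈ (Finset.univ.filter (fun j => (j, v) ∈ O')).filter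
            (fun j => (j, v) ∈ O), ω v j
          + ∑ j ∈ (Finset.univ.filter (fun j => (j, v) ∈ O')).filter
            (fun j => ¬ (j, v) ∈ O), ω v j = indegO ω O' v := by
        rw [indegO_eq_sum]
        exact Finset.sum_filter_add_sum_filter_not _ _ _
      have e3 : (Finset.univ.filter (fun j => (j, v) ∈ O)).filter (fun j => (j, v) ∈ O')
          = (Finset.univ.filter (fun j => (j, v) ∈ O')).filter (fun j => (j, v) ∈ O) := by
        ext j; simp only [Finset.mem_filter]; tauto
      have e4 : (Finset.univ.filter (fun j => (j, v) ∈ O)).filter (fun j => ¬ (j, v) ∈ O')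
          = Finset.univ.filter (fun j => R (j, v)) := by
        ext j; simp only [Finset.mem_filter, hR]; tauto
      have e5 : (Finset.univ.filter (fun j => (j, v) ∈ O')).filter (fun j => ¬ (j, v) ∈ O)
          = Finset.univ.filter (fun j => (j, v) ∈ O' ∧ (j, v) ∉ O) := by
        ext j; simp only [Finset.mem_filter]; tauto
      rw [e3, e4] at e1
      rw [e5] at e2
      have := hdeg v
      omega
    have hio : ∀ v : Fin (n + 1),
        ∑ j ∈ Finset.univ.filter (fun j => R (j, v)), ω v j
          = ∑ j ∈ Finset.univ.filter (fun j => R (v, j)), ω v j := by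
      intro v
      rw [hsums v]
      refine Finset.sum_congr ?_ fun _ _ => rfl
      ext j
      simp only [Finset.mem_filter, Finset.mem_univ, true_and]
      exact hswap j v
    have hstep : ∀ v : Fin (n + 1), (∃ j, R (j, v)) → ∃ j, R (v, j) := by
      rintro v ⟨j, hj⟩
      have hw : 1 ≤ ω j v := hO.2.1 (j, v) hj.1
      have hw' : 1 ≤ ω v j := by rwa [hsymm] at hw
      have hin : 1 ≤ ∑ j ∈ Finset.univ.filter (fun j => R (j, v)), ω v j :=
        hw'.trans (Finset.single_le_sum (fun _ _ => Nat.zero_le _)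
          (Finset.mem_filter.2 ⟨Finset.mem_univ j, hj⟩))
      rw [hio v] at hin
      by_contra hc
      push_neg at hc
      have : Finset.univ.filter (fun j => R (v, j)) = ∅ :=
        Finset.filter_eq_empty_iff.2 (fun {j} _ => hc j)
      rw [this] at hin
      simp at hin
    obtain ⟨⟨a, b⟩, hab⟩ := hRe
    have hstep' : ∀ x : {v : Fin (n + 1) // ∃ j, R (j, v)},
        ∃ y : {v : Fin (n + 1) // ∃ j, R (j, v)}, R (x.1, y.1) := by
      rintro ⟨v, hv⟩
      obtain ⟨j, hj⟩ := hstep v hv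
      exact ⟨⟨j, ⟨v, hj⟩⟩, hj⟩
    choose f hf using hstep'
    let x0 : {v : Fin (n + 1) // ∃ j, R (j, v)} := ⟨b, ⟨a, hab⟩⟩
    let g : ℕ → {v : Fin (n + 1) // ∃ j, R (j, v)} := fun m => f^[m] x0
    refine no_fwd_walk hacy (fun m => (g m).1) (fun m => ?_)
    show ((g m).1, (g (m + 1)).1) ∈ O
    have hgs : g (m + 1) = f (g m) := Function.iterate_succ_apply' f m x0
    rw [hgs]
    exact (hf (g m)).1
  · push_neg at hRe
    apply Set.Subset.antisymm
    · intro p hp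
      by_contra h'
      exact hRe p ⟨hp, h'⟩
    · rintro ⟨a, b⟩ hp
      by_contra h'
      exact hRe (b, a) ((hswap a b).1 ⟨hp, h'⟩)

end Aux3

/-- The map `O ↦ (indeg_O(1)−1,…,indeg_O(n)−1)` is a bijection from `A(G)` to `MPF(G)`. -/
theorem stmt7 (n : ℕ) (hn : 1 ≤ n) (ω : Fin (n + 1) → Fin (n + 1) → ℕ)
    (hsymm : ∀ i j, ω i j = ω j i) (hdiag : ∀ i, ω i i = 0) (hconn : ConnMG ω) :
    Set.BijOn (fun O => fun i : Fin n => indegO ω O i.succ - 1)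
      (ASet n ω) (MPFset n ω) := by
  classical
  have hW : ∀ O ∈ ASet n ω, ∀ O' ∈ ASet n ω,
      (∀ v, indegO ω O v ≤ indegO ω O' v) → ∀ v, indegO ω O v = indegO ω O' v := by
    intro O hO O' hO' hle v
    have h1 := sum_indeg hsymm hO.1
    have h2 := sum_indeg hsymm hO'.1
    have hsum : ∑ i, indegO ω O i = ∑ i, indegO ω O' i := by omega
    have hall := (Finset.sum_eq_sum_iff_of_le (fun i _ => hle i)).1 hsum
    exact hall v (Finset.mem_univ v)
  refine ⟨?_, ?_, ?_⟩
  · -- MapsTo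
    intro O hO
    have hpf : IsGPF n ω (fun i => indegO ω O i.succ - 1) := pf_of_aset hO
    refine ⟨hpf, ?_⟩
    intro β hβ hle
    obtain ⟨O', hO', hge⟩ := dhar hsymm hdiag hβ
    have hle'' : ∀ i : Fin n, indegO ω O i.succ - 1 ≤ β i := fun i => hle i
    have hle' : ∀ v, indegO ω O v ≤ indegO ω O' v := by
      intro v
      by_cases hv : v = 0
      · rw [hv, hO.2.2.1, hO'.2.2.1]
      · have h1 : indegO ω O v ≠ 0 := hO.2.2.2 v hv
        have h2 := hge (v.pred hv)
        rw [Fin.succ_pred] at h2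
        have h3 := hle'' (v.pred hv)
        rw [Fin.succ_pred] at h3
        omega
    have heq := hW O hO O' hO' hle'
    funext i
    show β i = indegO ω O i.succ - 1
    have e1 := heq i.succ
    have h2 := hge i
    have h3 := hle'' i
    omega
  · -- InjOn
    intro O hO O' hO' heq
    apply orient_eq hsymm hO.1 hO'.1 hO.2.1
    intro v
    by_cases hv : v = 0
    · rw [hv, hO.2.2.1, hO'.2.2.1]
    · have h1 : indegO ω O v ≠ 0 := hO.2.2.2 v hv
      have h2 : indegO ω O' v ≠ 0 := hO'.2.2.2 v hv
      have h3 : indegO ω O (v.pred hv).succ - 1 = indegO ω O' (v.pred hv).succ - 1 :=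
        congrFun heq (v.pred hv)
      rw [Fin.succ_pred] at h3
      omega
  · -- SurjOn
    intro α hα
    obtain ⟨hpf, hmax⟩ := hα
    obtain ⟨O, hO, hge⟩ := dhar hsymm hdiag hpf
    refine ⟨O, hO, ?_⟩
    have hβ : IsGPF n ω (fun i => indegO ω O i.succ - 1) := pf_of_aset hO
    have hle : α ≤ fun i => indegO ω O i.succ - 1 := by
      rw [Pi.le_def]
      intro i
      have := hge i
      show α i ≤ indegO ω O i.succ - 1
      omega
    exact hmax _ hβ hle
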